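/- Fix integers n ≥ 1 and p ≥ 1, and let ω ∈ ℂ be a primitive p-th root of unity. Let G, H ∈ ℂ[[X]] be the (unique) formal power series with constant term 1 satisfying X·G′ = G · Σ_{j≥1} binom(nj, j) X^j and X·H′ = H · Σ_{m≥1} binom(nmp, mp) X^m. Then ∏_{k=0}^{p−1} G(ω^k X) = H(X^p) in ℂ[[X]], where G(ω^k X) denotes the rescaling of G by ω^k and H(X^p) the substitution of X^p into H. (This is the identity e(*binom(np, p)) = ∏_{k=0}^{p−1} e(*binom(n,1))(ω^k z^{1/p}).) -/

import Mathlib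

open PowerSeries

lemma ode_unique (F Y Z : ℂ⟦X⟧) (hF : constantCoeff F = 0)
    (h0 : constantCoeff Y = constantCoeff Z)
    (hY : X * d⁄dX ℂ Y = Y * F) (hZ : X * d⁄dX ℂ Z = Z * F) : Y = Z := by
  ext k
  induction k using Nat.strong_induction_on with
  | _ k ih =>
    match k with
    | 0 => simpa using h0
    | k+1 =>
      have hy := congrArg (coeff (k+1)) hY
      have hz := congrArg (coeff (k+1)) hZ
      rw [coeff_succ_X_mul, coeff_derivative, coeff_mul] at hy hz
      have hs : (∑ x ∈ Finset.HasAntidiagonal.antidiagonal (k+1), coeff x.1 Y * coeff x.2 F)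
          = ∑ x ∈ Finset.HasAntidiagonal.antidiagonal (k+1), coeff x.1 Z * coeff x.2 F := by
        refine Finset.sum_congr rfl fun x hx => ?_
        rcases Nat.eq_zero_or_pos x.2 with h2 | h2
        · rw [h2]
          simp [coeff_zero_eq_constantCoeff, hF]
        · have hx1 : x.1 < k + 1 := by
            have := Finset.HasAntidiagonal.mem_antidiagonal.mp hx; omega
          rw [ih x.1 hx1]
      have key : coeff (k+1) Y * (k+1 : ℂ) = coeff (k+1) Z * (k+1 : ℂ) := by
        rw [hy, hs, ← hz]
      exact mul_right_cancel₀ (by exact_mod_cast Nat.succ_ne_zero k) key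

lemma rescale_X_mul_deriv (c : ℂ) (Y : ℂ⟦X⟧) :
    PowerSeries.rescale c (X * d⁄dX ℂ Y) = X * d⁄dX ℂ (PowerSeries.rescale c Y) := by
  ext k
  cases k with
  | zero => simp [coeff_rescale]
  | succ k =>
    simp only [coeff_rescale, coeff_succ_X_mul, coeff_derivative]
    ring

lemma prod_ode {ι : Type*} (s : Finset ι) (Y F : ι → ℂ⟦X⟧)
    (h : ∀ i ∈ s, X * d⁄dX ℂ (Y i) = Y i * F i) :
    X * d⁄dX ℂ (∏ i ∈ s, Y i) = (∏ i ∈ s, Y i) * ∑ i ∈ s, F i := by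
  induction s using Finset.cons_induction with
  | empty => simp
  | cons a s ha ih =>
    rw [Finset.prod_cons, Finset.sum_cons]
    calc X * d⁄dX ℂ (Y a * ∏ i ∈ s, Y i)
        = Y a * (X * d⁄dX ℂ (∏ i ∈ s, Y i)) + (∏ i ∈ s, Y i) * (X * d⁄dX ℂ (Y a)) := by
          rw [Derivation.leibniz, smul_eq_mul, smul_eq_mul]; ring
      _ = Y a * ((∏ i ∈ s, Y i) * ∑ i ∈ s, F i) + (∏ i ∈ s, Y i) * (Y a * F a) := by
          rw [ih (fun i hi => h i (Finset.mem_cons_of_mem hi)), h a (Finset.mem_cons_self a s)]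
      _ = (Y a * ∏ i ∈ s, Y i) * (F a + ∑ i ∈ s, F i) := by ring

lemma sum_p_dvd {M : Type*} [AddCommMonoid M] (p m : ℕ) (hp : 0 < p) (g : ℕ → M)
    (hg : ∀ i, ¬ p ∣ i → g i = 0) :
    ∑ i ∈ Finset.range (p * m + 1), g i = ∑ a ∈ Finset.range (m + 1), g (p * a) := by
  classical
  rw [← Finset.sum_filter_of_ne (p := fun i => p ∣ i)
    (fun i _ h => by_contra fun hd => h (hg i hd))]
  refine Finset.sum_nbij' (i := fun i => i / p) (j := fun a => p * a) ?_ ?_ ?_ ?_ ?_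
  · intro i hi
    simp only [Finset.mem_filter, Finset.mem_range] at hi ⊢
    obtain ⟨hi1, c, rfl⟩ := hi
    have : c ≤ m := by nlinarith
    rw [Nat.mul_div_cancel_left _ hp]; omega
  · intro a ha
    simp only [Finset.mem_range] at ha
    simp only [Finset.mem_filter, Finset.mem_range]
    exact ⟨by nlinarith, Dvd.intro a rfl⟩
  · intro i hi
    simp only [Finset.mem_filter] at hi
    exact Nat.mul_div_cancel' hi.2
  · intro a _
    exact Nat.mul_div_cancel_left _ hp
  · intro i hi
    simp only [Finset.mem_filter] at hi
    rw [Nat.mul_div_cancel' hi.2]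

lemma root_sum (p : ℕ) (ω : ℂ) (hω : IsPrimitiveRoot ω p) (j : ℕ) :
    ∑ k ∈ Finset.range p, (ω ^ k) ^ j = if p ∣ j then (p : ℂ) else 0 := by
  have h : ∀ k, (ω ^ k) ^ j = (ω ^ j) ^ k := fun k => by
    rw [← pow_mul, ← pow_mul, mul_comm]
  simp_rw [h]
  by_cases hd : p ∣ j
  · rw [if_pos hd, (hω.pow_eq_one_iff_dvd j).mpr hd]; simp
  · rw [if_neg hd]
    have h1 : ω ^ j ≠ 1 := fun h => hd ((hω.pow_eq_one_iff_dvd j).mp h)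
    have h2 : (ω ^ j) ^ p = 1 := by
      rw [← pow_mul, mul_comm, pow_mul, hω.pow_eq_one, one_pow]
    rw [geom_sum_eq h1, h2]; simp


/-- The identity `e(*binom(np,p)) = ∏_{k=0}^{p−1} e(*binom(n,1))(ω^k z^{1/p})`:
if `G` and `H` are the power series with constant term 1 whose logarithmic
derivatives have coefficients `binom(nj,j)` and `binom(nmp,mp)` respectively,
and `ω` is a primitive `p`-th root of unity, then
`∏_{k=0}^{p−1} G(ω^k X) = H(X^p)`. -/
theorem prod_rescale_eq_subst_pow (n p : ℕ) (hn : 1 ≤ n) (hp : 1 ≤ p)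
    (ω : ℂ) (hω : IsPrimitiveRoot ω p) (G H : ℂ⟦X⟧)
    (hG0 : constantCoeff G = 1)
    (hG : X * (d⁄dX ℂ G) =
      G * (PowerSeries.mk fun j => if j = 0 then 0 else (Nat.choose (n * j) j : ℂ)))
    (hH0 : constantCoeff H = 1)
    (hH : X * (d⁄dX ℂ H) =
      H * (PowerSeries.mk fun m =>
        if m = 0 then 0 else (Nat.choose (n * m * p) (m * p) : ℂ))) :
    ∏ k ∈ Finset.range p, PowerSeries.rescale (ω ^ k) G =
      PowerSeries.mk fun k => if p ∣ k then PowerSeries.coeff (k / p) H else 0 := by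
  set F1 : ℂ⟦X⟧ := PowerSeries.mk fun j => if j = 0 then 0 else (Nat.choose (n * j) j : ℂ)
    with hF1
  set Fp : ℂ⟦X⟧ := PowerSeries.mk fun j =>
      if p ∣ j ∧ j ≠ 0 then (p : ℂ) * (Nat.choose (n * j) j : ℂ) else 0 with hFpdef
  set Q : ℂ⟦X⟧ := PowerSeries.mk fun k =>
      if p ∣ k then PowerSeries.coeff (k / p) H else 0 with hQdef
  have hFp0 : constantCoeff Fp = 0 := by
    rw [← coeff_zero_eq_constantCoeff, hFpdef, coeff_mk]
    simp
  -- Step A: sum of rescaled F1 equals Fp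
  have hA : (∑ k ∈ Finset.range p, PowerSeries.rescale (ω ^ k) F1) = Fp := by
    ext j
    rw [map_sum, hFpdef, coeff_mk]
    simp only [coeff_rescale, hF1, coeff_mk]
    rw [← Finset.sum_mul, root_sum p ω hω j]
    by_cases hj : j = 0
    · simp [hj]
    · by_cases hd : p ∣ j <;> simp [hj, hd]
  -- Step B: the product satisfies the ODE
  have hB : X * d⁄dX ℂ (∏ k ∈ Finset.range p, PowerSeries.rescale (ω ^ k) G) =
      (∏ k ∈ Finset.range p, PowerSeries.rescale (ω ^ k) G) * Fp := by
    rw [← hA]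
    refine prod_ode (Finset.range p) _ (fun k => PowerSeries.rescale (ω ^ k) F1) fun k _ => ?_
    rw [← rescale_X_mul_deriv, hG, map_mul]
  have hB0 : constantCoeff (∏ k ∈ Finset.range p, PowerSeries.rescale (ω ^ k) G) = 1 := by
    rw [map_prod]
    refine Finset.prod_eq_one fun k _ => ?_
    rw [← coeff_zero_eq_constantCoeff, coeff_rescale, pow_zero, one_mul,
      coeff_zero_eq_constantCoeff, hG0]
  -- Step C: Q satisfies the ODE
  have hQ0 : constantCoeff Q = 1 := by
    rw [← coeff_zero_eq_constantCoeff, hQdef, coeff_mk, if_pos (dvd_zero p), Nat.zero_div,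
      coeff_zero_eq_constantCoeff, hH0]
  have hC : X * d⁄dX ℂ Q = Q * Fp := by
    ext K
    cases K with
    | zero =>
      simp only [coeff_zero_eq_constantCoeff, map_mul, constantCoeff_X, zero_mul, hFp0, mul_zero]
    | succ k =>
      rw [coeff_succ_X_mul, coeff_derivative, coeff_mul,
        Finset.Nat.sum_antidiagonal_eq_sum_range_succ_mk]
      by_cases hd : p ∣ (k + 1)
      · obtain ⟨m, hm⟩ := hd
        have hm1 : 1 ≤ m := by nlinarith
        obtain ⟨t, rfl⟩ : ∃ t, m = t + 1 := ⟨m - 1, by omega⟩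
        rw [hm]
        have hLHS : coeff (p * (t+1)) Q = coeff (t+1) H := by
          rw [hQdef, coeff_mk, if_pos ⟨t+1, rfl⟩, Nat.mul_div_cancel_left _ hp]
        rw [hLHS]
        have hrange : (Finset.range (p * (t+1)).succ) = Finset.range (p * (t+1) + 1) := rfl
        rw [hrange, sum_p_dvd p (t+1) hp _ (fun i hi => by
          simp only [hQdef, coeff_mk]
          rw [if_neg hi, zero_mul])]
        have hh := congrArg (coeff (t+1)) hH
        rw [coeff_succ_X_mul, coeff_derivative, coeff_mul,
          Finset.Nat.sum_antidiagonal_eq_sum_range_succ_mk] at hh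
        have hterm : ∀ a ∈ Finset.range (t+1).succ,
            coeff ((p*a, p*(t+1) - p*a).1) Q * coeff ((p*a, p*(t+1) - p*a).2) Fp
            = (p : ℂ) * (coeff ((a, t+1-a).1) H * coeff ((a, t+1-a).2)
                (PowerSeries.mk fun m =>
                  if m = 0 then 0 else (Nat.choose (n * m * p) (m * p) : ℂ))) := by
          intro a ha
          rw [Finset.mem_range] at ha
          have hale : a ≤ t + 1 := by omega
          have hsub : p * (t+1) - p * a = p * (t+1-a) := (Nat.mul_sub p (t+1) a).symm
          simp only [hQdef, hFpdef, coeff_mk]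
          rw [if_pos ⟨a, rfl⟩, Nat.mul_div_cancel_left _ hp, hsub]
          by_cases hma : a = t + 1
          · simp [hma]
          · have h1 : t + 1 - a ≠ 0 := by omega
            have h2 : p * (t+1-a) ≠ 0 := by positivity
            rw [if_pos ⟨⟨t+1-a, rfl⟩, h2⟩, if_neg h1]
            have e1 : n * (p * (t+1-a)) = n * (t+1-a) * p := by ring
            have e2 : p * (t+1-a) = (t+1-a) * p := by ring
            rw [e1, e2]
            ring
        rw [Finset.sum_congr rfl hterm, ← Finset.mul_sum, ← hh]
        have hc : ((k : ℂ) + 1) = (p : ℂ) * ((t : ℂ) + 1) := by exact_mod_cast hm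
        rw [hc]; ring
      · have hq : coeff (k+1) Q = 0 := by
          rw [hQdef, coeff_mk, if_neg hd]
        rw [hq, zero_mul]
        refine (Finset.sum_eq_zero fun i hi => ?_).symm
        rw [Finset.mem_range] at hi
        by_cases hdi : p ∣ i
        · have hni : ¬ (p ∣ (k + 1 - i) ∧ (k + 1 - i) ≠ 0) := by
            rintro ⟨hdj, hne⟩
            exact hd (by
              have : k + 1 = i + (k + 1 - i) := by omega
              rw [this]; exact dvd_add hdi hdj)
          simp only [hFpdef, coeff_mk]
          rw [if_neg hni, mul_zero]
        · simp only [hQdef, coeff_mk]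
          rw [if_neg hdi, zero_mul]
  -- Conclude by uniqueness
  exact ode_unique Fp _ Q hFp0 (by rw [hB0, hQ0]) hB hC
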